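/- For every n ≥ 0, the diagonal entry of the σ-matrix is nonnegative: σ_n(n) ≥ 0, where σ_n(n) is the coefficient of x^n in ∏_{m≥1, m≠n}(1 - x^m) (with σ_0(0) = 1). -/

import Mathlib

/-- Coefficient of `x^n` in Euler's product `∏_{m ≥ 1} (1 - x^m)` (the pentagonal
number theorem sequence); factors with `m > n` do not affect this coefficient, so the
product may be truncated at `m = n`. -/
noncomputable def sigma0 (n : ℕ) : ℤ :=
  PowerSeries.coeff (R := ℤ) n (∏ m ∈ Finset.Icc 1 n, (1 - PowerSeries.X ^ m))

/-- Coefficient of `x^n` in `∏_{m ≥ 1, m ≠ j} (1 - x^m)` (the `j`-laced sequence);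
for `j = 0` this is the full Euler product. -/
noncomputable def sigmaJ (j n : ℕ) : ℤ :=
  PowerSeries.coeff (R := ℤ) n (∏ m ∈ (Finset.Icc 1 n).erase j, (1 - PowerSeries.X ^ m))

/-- `ρ(0) = 1`, and for `n ≥ 1`, `ρ(n)` is the number of positive divisors of `n`. -/
def rho (n : ℕ) : ℤ := if n = 0 then 1 else (n.divisors.card : ℤ)

/-- Integer-indexed `ρ`, vanishing on negative arguments. -/
def rhoZ (m : ℤ) : ℤ := if 0 ≤ m then rho m.toNat else 0

/-- The σ-sequence: `σ(n) = ∑_{j=0}^{n} σ_j(n - j)`, the coefficient of `x^n` in the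
σ-function `∑_{h ≥ 0} x^h ∏_{m ≥ 1, m ≠ h} (1 - x^m)`. -/
noncomputable def sigmaSeq (n : ℕ) : ℤ := ∑ j ∈ Finset.range (n+1), sigmaJ j (n - j)

namespace Stmt9Aux

open Finset PowerSeries

/-! ### The set of distinct partitions of `n` into parts `< n`, as subsets of `[1, n-1]` -/

def Pn (n : ℕ) : Finset (Finset ℕ) :=
  (Finset.Icc 1 (n-1)).powerset.filter (fun A => A.sum id = n)

lemma mem_Pn {n : ℕ} {A : Finset ℕ} : A ∈ Pn n ↔ A ⊆ Finset.Icc 1 (n-1) ∧ ∑ x ∈ A, x = n := by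
  rw [Pn, mem_filter, mem_powerset]
  exact Iff.rfl

lemma erase_Icc (n : ℕ) : (Finset.Icc 1 n).erase n = Finset.Icc 1 (n-1) := by
  ext x; simp [Finset.mem_erase, Finset.mem_Icc]; omega

lemma step1 (n : ℕ) : sigmaJ n n = ∑ A ∈ Pn n, (-1:ℤ)^A.card := by
  unfold sigmaJ
  rw [erase_Icc, Pn]
  have h1 : ∀ m ∈ Finset.Icc 1 (n-1), (1 : PowerSeries ℤ) - X ^ m
      = (C (-1 : ℤ)) * X ^ m + 1 := by
    intro m _; simp; ring
  rw [Finset.prod_congr rfl h1, Finset.prod_add, map_sum, Finset.sum_filter]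
  apply Finset.sum_congr rfl
  intro A _
  rw [Finset.prod_const_one, mul_one, Finset.prod_mul_distrib, Finset.prod_const,
    ← map_pow, Finset.prod_pow_eq_pow_sum _ (fun i => i), coeff_C_mul, coeff_X_pow]
  simp only [Finset.sum_apply, id]
  by_cases h : ∑ i ∈ A, i = n
  · simp [h]
  · simp [h, Ne.symm h]

/-! ### Franklin's involution -/

def mx (A : Finset ℕ) : ℕ := if h : A.Nonempty then A.max' h else 0
def mn (A : Finset ℕ) : ℕ := if h : A.Nonempty then A.min' h else 0
def runF (A : Finset ℕ) : Finset ℕ := A.filter (fun x => Finset.Icc x (mx A) ⊆ A)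
def cc (A : Finset ℕ) : ℕ := if h : (runF A).Nonempty then (runF A).min' h else 0
def tt' (A : Finset ℕ) : ℕ := mx A - cc A + 1

def phi (A : Finset ℕ) : Finset ℕ :=
  if mn A ≤ tt' A then insert (mx A + 1) ((A.erase (mn A)).erase (mx A - mn A + 1))
  else insert (tt' A) (insert (cc A - 1) (A.erase (mx A)))

def Exc (n : ℕ) (A : Finset ℕ) : Prop :=
  (∃ k, 1 ≤ k ∧ A = Finset.Icc k (2*k-1)) ∨ (∃ k, A = Finset.Icc (k+1) (2*k)) ∨ A = {1, n-1}

noncomputable instance (n : ℕ) : DecidablePred (Exc n) := Classical.decPred _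

variable {A : Finset ℕ}

lemma mx_mem (h : A.Nonempty) : mx A ∈ A := by rw [mx, dif_pos h]; exact A.max'_mem h
lemma mn_mem (h : A.Nonempty) : mn A ∈ A := by rw [mn, dif_pos h]; exact A.min'_mem h
lemma le_mx {x : ℕ} (hx : x ∈ A) : x ≤ mx A := by rw [mx, dif_pos ⟨x, hx⟩]; exact A.le_max' x hx
lemma mn_le {x : ℕ} (hx : x ∈ A) : mn A ≤ x := by rw [mn, dif_pos ⟨x, hx⟩]; exact A.min'_le x hx

lemma mx_eq {b : ℕ} (hb : b ∈ A) (hall : ∀ x ∈ A, x ≤ b) : mx A = b :=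
  le_antisymm (hall _ (mx_mem ⟨b, hb⟩)) (le_mx hb)

lemma mn_eq {b : ℕ} (hb : b ∈ A) (hall : ∀ x ∈ A, b ≤ x) : mn A = b :=
  le_antisymm (mn_le hb) (hall _ (mn_mem ⟨b, hb⟩))

lemma mx_mem_run (h : A.Nonempty) : mx A ∈ runF A := by
  rw [runF, mem_filter]
  refine ⟨mx_mem h, ?_⟩
  intro x hx
  simp only [mem_Icc] at hx
  have : x = mx A := le_antisymm hx.2 hx.1
  exact this ▸ mx_mem h

lemma run_nonempty (h : A.Nonempty) : (runF A).Nonempty := ⟨mx A, mx_mem_run h⟩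

lemma cc_mem_run (h : A.Nonempty) : cc A ∈ runF A := by
  rw [cc, dif_pos (run_nonempty h)]; exact Finset.min'_mem _ _

lemma cc_mem (h : A.Nonempty) : cc A ∈ A := (mem_filter.1 (cc_mem_run h)).1

lemma cc_icc (h : A.Nonempty) : Finset.Icc (cc A) (mx A) ⊆ A := (mem_filter.1 (cc_mem_run h)).2

lemma cc_le (h : A.Nonempty) {x : ℕ} (hx : x ∈ A) (hicc : Finset.Icc x (mx A) ⊆ A) : cc A ≤ x := by
  rw [cc, dif_pos (run_nonempty h)]
  exact Finset.min'_le _ _ (mem_filter.2 ⟨hx, hicc⟩)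

lemma cc_eq (h : A.Nonempty) {b : ℕ} (hb : b ∈ A) (hicc : Finset.Icc b (mx A) ⊆ A)
    (hall : ∀ x ∈ runF A, b ≤ x) : cc A = b :=
  le_antisymm (cc_le h hb hicc) (hall _ (cc_mem_run h))

lemma cc_pred_not_mem (h : A.Nonempty) (h0 : 0 ∉ A) : cc A - 1 ∉ A := by
  intro hm
  have h1 : 1 ≤ cc A := by
    rcases Nat.eq_zero_or_pos (cc A) with h'|h'
    · exact absurd (h' ▸ cc_mem h) h0
    · exact h'
  have : cc A ≤ cc A - 1 := by
    apply cc_le h hm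
    intro x hx
    simp only [mem_Icc] at hx
    rcases Nat.eq_or_lt_of_le hx.1 with h'|h'
    · exact h' ▸ hm
    · exact cc_icc h (mem_Icc.2 ⟨by omega, hx.2⟩)
  omega
lemma twice_sum_Icc (a b : ℕ) (h : a ≤ b + 1) :
    (∑ x ∈ Finset.Icc a b, x) * 2 + a * (a-1) = (b+1) * b := by
  have h1 := Finset.sum_range_id_mul_two (b+1)
  have h2 := Finset.sum_range_id_mul_two a
  have h3 : (∑ i ∈ Finset.range a, i) + (∑ i ∈ Finset.Ico a (b+1), i)
      = ∑ i ∈ Finset.range (b+1), i := by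
    rw [Finset.range_eq_Ico, Finset.range_eq_Ico]
    exact Finset.sum_Ico_consecutive (fun i => i) (Nat.zero_le a) h
  rw [← Finset.Ico_add_one_right_eq_Icc]
  have hb : b + 1 - 1 = b := rfl
  rw [hb] at h1
  linarith


lemma phi_main (n : ℕ) (A : Finset ℕ) (hP : A ∈ Pn n) (hexc : ¬ Exc n A) :
    phi A ∈ Pn n ∧ ¬ Exc n (phi A) ∧ phi (phi A) = A ∧
      ((phi A).card = A.card + 1 ∨ A.card = (phi A).card + 1) := by
  obtain ⟨hsub, hsum⟩ := mem_Pn.1 hP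
  have hA : A.Nonempty := by
    rcases A.eq_empty_or_nonempty with h|h
    · exact absurd (Or.inr (Or.inl ⟨0, by simp [h]⟩)) hexc
    · exact h
  set s := mn A with hs
  set M := mx A with hM
  set c := cc A with hc
  have hbound : ∀ x ∈ A, 1 ≤ x ∧ x ≤ n - 1 := fun x hx => mem_Icc.1 (hsub hx)
  have hsA : s ∈ A := mn_mem hA
  have hMA : M ∈ A := mx_mem hA
  have h1s : 1 ≤ s := (hbound _ hsA).1
  have hMn : M ≤ n - 1 := (hbound _ hMA).2
  have h1M : 1 ≤ M := (hbound _ hMA).1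
  have h0A : 0 ∉ A := fun h0 => by have := (hbound 0 h0).1; omega
  have hcA : c ∈ A := cc_mem hA
  have hicc : Finset.Icc c M ⊆ A := cc_icc hA
  have hsc : s ≤ c := mn_le hcA
  have hcM : c ≤ M := le_mx hcA
  have hcp : c - 1 ∉ A := cc_pred_not_mem hA h0A
  have h1c : 1 ≤ c := (hbound _ hcA).1
  have hsltM : s < M := by
    rcases Nat.lt_or_ge s M with h|h
    · exact h
    · exfalso
      have hsM : s = M := le_antisymm (mn_le hMA) h
      have hA1 : A = {M} := by
        apply Finset.eq_singleton_iff_unique_mem.2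
        exact ⟨hMA, fun x hx => le_antisymm (le_mx hx) (hsM ▸ mn_le hx)⟩
      rw [hA1, Finset.sum_singleton] at hsum
      omega
  have hpair : ({s, M} : Finset ℕ) ⊆ A := by
    intro x hx
    rcases mem_insert.1 hx with h|h
    · exact h ▸ hsA
    · exact (mem_singleton.1 h) ▸ hMA
  have hsum2 : s + M ≤ n := by
    have h2 : ∑ x ∈ ({s, M} : Finset ℕ), x ≤ ∑ x ∈ A, x := Finset.sum_le_sum_of_subset hpair
    rw [Finset.sum_pair (by omega : s ≠ M)] at h2
    omega
  have hcard2 : 2 ≤ A.card := Finset.one_lt_card.2 ⟨s, hsA, M, hMA, by omega⟩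
  by_cases hbr : mn A ≤ tt' A
  · -- CASE 1
    have hbr' : s ≤ M - c + 1 := hbr
    have h2s : 2 * s ≤ M := by
      by_contra hcon
      push_neg at hcon
      have hceq : c = s := by omega
      have hAeq : A = Finset.Icc s M :=
        Finset.Subset.antisymm (fun x hx => mem_Icc.2 ⟨mn_le hx, le_mx hx⟩) (hceq ▸ hicc)
      have hMeq : M = 2*s - 1 := by omega
      exact hexc (Or.inl ⟨s, h1s, by rw [hAeq, hMeq]⟩)
    have hM2 : M + 1 ≤ n - 1 := by
      by_contra hcon
      have hMeq : M = n - 1 := by omega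
      have hs1 : s = 1 := by omega
      have hAeq : A = {s, M} := by
        by_contra hne
        have hss : ({s, M} : Finset ℕ) ⊂ A :=
          ⟨hpair, fun hsub' => hne (Finset.Subset.antisymm hsub' hpair)⟩
        obtain ⟨x, hxA, hxn⟩ := Finset.exists_of_ssubset hss
        have hins : insert x ({s, M} : Finset ℕ) ⊆ A := by
          intro y hy
          rcases mem_insert.1 hy with h|h
          · exact h ▸ hxA
          · exact hpair h
        have hsum3 : ∑ y ∈ insert x ({s, M} : Finset ℕ), y ≤ ∑ y ∈ A, y := Finset.sum_le_sum_of_subset hins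
        rw [Finset.sum_insert hxn, Finset.sum_pair (by omega : s ≠ M)] at hsum3
        have hx1 := (hbound x hxA).1
        omega
      exact hexc (Or.inr (Or.inr (by rw [hAeq, hs1, hMeq])))
    have hm1A : M - s + 1 ∈ A := hicc (mem_Icc.2 ⟨by omega, by omega⟩)
    have hm1e : M - s + 1 ∈ A.erase s := mem_erase.2 ⟨by omega, hm1A⟩
    set B := insert (M + 1) ((A.erase s).erase (M - s + 1)) with hB
    have hMB : M + 1 ∉ (A.erase s).erase (M - s + 1) := by
      intro hmem
      have h2 : M + 1 ∈ A := mem_of_mem_erase (mem_of_mem_erase hmem)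
      have := le_mx h2
      omega
    have hmemB : ∀ x, x ∈ B ↔ x = M + 1 ∨ (x ∈ A ∧ x ≠ s ∧ x ≠ M - s + 1) := by
      intro x
      simp only [hB, mem_insert, mem_erase]
      tauto
    have hphiA : phi A = B := by unfold phi; rw [if_pos hbr]
    have hBne : B.Nonempty := ⟨M+1, mem_insert_self _ _⟩
    have hBsub : B ⊆ Finset.Icc 1 (n-1) := by
      intro x hx
      rcases (hmemB x).1 hx with h|h
      · exact h ▸ mem_Icc.2 ⟨by omega, hM2⟩
      · exact hsub h.1
    have hBsum : ∑ x ∈ B, x = n := by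
      have e1 : s + ∑ x ∈ A.erase s, x = ∑ x ∈ A, x := Finset.add_sum_erase A (fun x => x) hsA
      have e2 : (M - s + 1) + ∑ x ∈ (A.erase s).erase (M-s+1), x = ∑ x ∈ A.erase s, x :=
        Finset.add_sum_erase _ (fun x => x) hm1e
      have e3 : ∑ x ∈ B, x = (M+1) + ∑ x ∈ (A.erase s).erase (M-s+1), x := by
        rw [hB, Finset.sum_insert hMB]
      omega
    have hBcard : A.card = B.card + 1 := by
      rw [hB, Finset.card_insert_of_notMem hMB, Finset.card_erase_of_mem hm1e,
        Finset.card_erase_of_mem hsA]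
      omega
    have hBge : ∀ x ∈ B, s + 1 ≤ x := by
      intro x hx
      rcases (hmemB x).1 hx with h|h
      · omega
      · have := mn_le h.1
        rcases h with ⟨_, hxs, _⟩
        omega
    have hmxB : mx B = M + 1 := by
      apply mx_eq (mem_insert_self _ _)
      intro x hx
      rcases (hmemB x).1 hx with h|h
      · omega
      · have := le_mx h.1; omega
    have hm1nB : M - s + 1 ∉ B := by
      intro hmem
      rcases (hmemB _).1 hmem with h|h
      · omega
      · exact h.2.2 rfl
    have hIccB : Finset.Icc (M-s+2) (M+1) ⊆ B := by
      intro x hx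
      simp only [mem_Icc] at hx
      rcases Nat.eq_or_lt_of_le hx.2 with h|h
      · rw [hmemB]; left; omega
      · rw [hmemB]; right
        exact ⟨hicc (mem_Icc.2 ⟨by omega, by omega⟩), by omega, by omega⟩
    have hccB : cc B = M - s + 2 := by
      apply cc_eq hBne (hIccB (mem_Icc.2 ⟨le_refl _, by omega⟩)) (by rw [hmxB]; exact hIccB)
      intro x hx
      rw [runF, mem_filter] at hx
      by_contra hcon
      push_neg at hcon
      apply hm1nB
      apply hx.2
      rw [hmxB]
      have hx1 : 1 ≤ x := by
        rcases (hmemB x).1 hx.1 with h|h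
        · omega
        · exact (hbound _ h.1).1
      exact mem_Icc.2 ⟨by omega, by omega⟩
    have httB : tt' B = s := by rw [tt', hmxB, hccB]; omega
    have hmnB : s + 1 ≤ mn B := hBge _ (mn_mem hBne)
    have hbrB : ¬ (mn B ≤ tt' B) := by rw [httB]; omega
    have hphiB : phi B = A := by
      unfold phi
      rw [if_neg hbrB, httB, hccB, hmxB]
      have h22 : M - s + 2 - 1 = M - s + 1 := by omega
      rw [h22, hB, Finset.erase_insert hMB, Finset.insert_erase hm1e, Finset.insert_erase hsA]
    have hexcB : ¬ Exc n B := by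
      intro hEx
      rcases hEx with ⟨k, hk1, hkeq⟩ | ⟨k, hkeq⟩ | heq
      · have hmem1 : M + 1 ∈ Finset.Icc k (2*k-1) := hkeq ▸ mem_insert_self _ _
        have hmem2 : M - s + 2 ∈ Finset.Icc k (2*k-1) :=
          hkeq ▸ hIccB (mem_Icc.2 ⟨le_refl _, by omega⟩)
        simp only [mem_Icc] at hmem1 hmem2
        have hk : k = M - s + 2 := by
          by_contra hne
          exact hm1nB (hkeq ▸ mem_Icc.2 ⟨by omega, by omega⟩)
        have hmem3 : (2*k-1 : ℕ) ∈ B := hkeq ▸ mem_Icc.2 ⟨by omega, le_refl _⟩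
        have h3 := le_mx hmem3
        rw [hmxB] at h3
        omega
      · have hmem1 : M + 1 ∈ Finset.Icc (k+1) (2*k) := hkeq ▸ mem_insert_self _ _
        have hmem2 : M - s + 2 ∈ Finset.Icc (k+1) (2*k) :=
          hkeq ▸ hIccB (mem_Icc.2 ⟨le_refl _, by omega⟩)
        simp only [mem_Icc] at hmem1 hmem2
        have hk : k + 1 = M - s + 2 := by
          by_contra hne
          exact hm1nB (hkeq ▸ mem_Icc.2 ⟨by omega, by omega⟩)
        have hmem3 : (2*k : ℕ) ∈ B := hkeq ▸ mem_Icc.2 ⟨by omega, le_refl _⟩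
        have h3 := le_mx hmem3
        rw [hmxB] at h3
        omega
      · have h1B : (1 : ℕ) ∈ B := by rw [heq]; simp
        have := hBge 1 h1B
        omega
    rw [hphiA]
    exact ⟨mem_Pn.2 ⟨hBsub, hBsum⟩, hexcB, hphiB, Or.inr hBcard⟩
  · -- CASE 2
    push_neg at hbr
    have hbr' : M - c + 1 < s := hbr
    have hbr0 : ¬ (mn A ≤ tt' A) := by
      intro h
      have : s ≤ M - c + 1 := h
      omega
    have hc2 : 2 ≤ c := by omega
    have htc : M - c + 1 ≠ c - 1 := by
      intro heq
      have hsceq : s = c := by omega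
      have hAeq : A = Finset.Icc c M :=
        Finset.Subset.antisymm (fun x hx => mem_Icc.2 ⟨hsceq ▸ mn_le hx, le_mx hx⟩) hicc
      apply hexc
      right; left
      exact ⟨c - 1, by rw [hAeq]; congr 1 <;> omega⟩
    set B := insert (M - c + 1) (insert (c - 1) (A.erase M)) with hB
    have htnA : M - c + 1 ∉ A := fun h => by have := mn_le h; omega
    have hcpe : c - 1 ∉ A.erase M := fun h => hcp (mem_of_mem_erase h)
    have htni : M - c + 1 ∉ insert (c-1) (A.erase M) := by
      simp only [mem_insert]
      push_neg
      exact ⟨htc, fun h => htnA (mem_of_mem_erase h)⟩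
    have hmemB : ∀ x, x ∈ B ↔ x = M - c + 1 ∨ x = c - 1 ∨ (x ∈ A ∧ x ≠ M) := by
      intro x
      simp only [hB, mem_insert, mem_erase]
      exact or_congr_right (or_congr_right and_comm)
    have hphiA : phi A = B := by unfold phi; rw [if_neg hbr0]; rfl
    have hBsub : B ⊆ Finset.Icc 1 (n-1) := by
      intro x hx
      rcases (hmemB x).1 hx with h|h|h
      · exact h ▸ mem_Icc.2 ⟨by omega, by omega⟩
      · exact h ▸ mem_Icc.2 ⟨by omega, by omega⟩
      · exact hsub h.1
    have hBsum : ∑ x ∈ B, x = n := by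
      have e1 : M + ∑ x ∈ A.erase M, x = ∑ x ∈ A, x := Finset.add_sum_erase A (fun x => x) hMA
      have e2 : ∑ x ∈ B, x = (M - c + 1) + ((c-1) + ∑ x ∈ A.erase M, x) := by
        rw [hB, Finset.sum_insert htni, Finset.sum_insert hcpe]
      omega
    have hBcard : B.card = A.card + 1 := by
      rw [hB, Finset.card_insert_of_notMem htni, Finset.card_insert_of_notMem hcpe,
        Finset.card_erase_of_mem hMA]
      omega
    have hBne : B.Nonempty := ⟨_, mem_insert_self _ _⟩
    have hBle : ∀ x ∈ B, x ≤ M - 1 := by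
      intro x hx
      rcases (hmemB x).1 hx with h|h|h
      · omega
      · omega
      · have := le_mx h.1; rcases h with ⟨_, hne⟩; omega
    have hM1B : M - 1 ∈ B := by
      rcases Nat.lt_or_ge c M with h|h
      · rw [hmemB]; right; right
        exact ⟨hicc (mem_Icc.2 ⟨by omega, by omega⟩), by omega⟩
      · rw [hmemB]; right; left; omega
    have hmxB : mx B = M - 1 := mx_eq hM1B hBle
    have hBget : ∀ x ∈ B, M - c + 1 ≤ x := by
      intro x hx
      rcases (hmemB x).1 hx with h|h|h
      · omega
      · omega
      · have := mn_le h.1; omega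
    have hmnB : mn B = M - c + 1 := mn_eq (mem_insert_self _ _) hBget
    have hIccB : Finset.Icc (c-1) (M-1) ⊆ B := by
      intro x hx
      simp only [mem_Icc] at hx
      rcases Nat.eq_or_lt_of_le hx.1 with h|h
      · rw [hmemB]; right; left; omega
      · rw [hmemB]; right; right
        exact ⟨hicc (mem_Icc.2 ⟨by omega, by omega⟩), by omega⟩
    have hccB_le : cc B ≤ c - 1 :=
      cc_le hBne (hIccB (mem_Icc.2 ⟨le_refl _, by omega⟩)) (by rw [hmxB]; exact hIccB)
    have hbrB : mn B ≤ tt' B := by rw [hmnB, tt', hmxB]; omega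
    have hphiB : phi B = A := by
      unfold phi
      rw [if_pos hbrB, hmnB, hmxB]
      have e1 : M - 1 + 1 = M := by omega
      have e2 : M - 1 - (M - c + 1) + 1 = c - 1 := by omega
      rw [e1, e2, hB, Finset.erase_insert htni, Finset.erase_insert hcpe,
        Finset.insert_erase hMA]
    have hexcB : ¬ Exc n B := by
      intro hEx
      rcases hEx with ⟨k, hk1, hkeq⟩ | ⟨k, hkeq⟩ | heq
      · have htB : M - c + 1 ∈ B := mem_insert_self _ _
        have h1 := mem_Icc.1 (hkeq ▸ htB)
        have hkB : k ∈ B := hkeq ▸ mem_Icc.2 ⟨le_refl _, by omega⟩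
        have h2 : M - c + 1 ≤ k := hBget _ hkB
        have h3 := mem_Icc.1 (hkeq ▸ hM1B)
        have h4 : (2*k-1 : ℕ) ≤ M - 1 := hBle _ (hkeq ▸ mem_Icc.2 ⟨by omega, le_refl _⟩)
        have hsceq : s = c := by omega
        have hAeq : A = Finset.Icc c M :=
          Finset.Subset.antisymm (fun x hx => mem_Icc.2 ⟨hsceq ▸ mn_le hx, le_mx hx⟩) hicc
        apply hexc
        right; left
        refine ⟨k, ?_⟩
        rw [hAeq]
        congr 1 <;> omega
      · have htB : M - c + 1 ∈ B := mem_insert_self _ _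
        have h1 := mem_Icc.1 (hkeq ▸ htB)
        have hkB : k + 1 ∈ B := hkeq ▸ mem_Icc.2 ⟨le_refl _, by omega⟩
        have h2 : M - c + 1 ≤ k + 1 := hBget _ hkB
        have h3 := mem_Icc.1 (hkeq ▸ hM1B)
        have h4 : (2*k : ℕ) ≤ M - 1 := hBle _ (hkeq ▸ mem_Icc.2 ⟨by omega, le_refl _⟩)
        omega
      · have hcardB : B.card ≤ 2 := by
          rw [heq]
          exact (Finset.card_insert_le _ _).trans (by simp)
        omega
    rw [hphiA]
    exact ⟨mem_Pn.2 ⟨hBsub, hBsum⟩, hexcB, hphiB, Or.inl hBcard⟩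

lemma odd_exc {n : ℕ} {A : Finset ℕ} (hE : A ∈ (Pn n).filter (Exc n)) (hodd : Odd A.card) :
    ∃ k, 2 ≤ k ∧ Odd k ∧
      ((A = Finset.Icc k (2*k-1) ∧ 2*n + k = 3*k*k) ∨
       (A = Finset.Icc (k+1) (2*k) ∧ 2*n = 3*k*k + k)) := by
  obtain ⟨hP, hex⟩ := mem_filter.1 hE
  obtain ⟨hsub, hsum⟩ := mem_Pn.1 hP
  rcases hex with ⟨k, hk1, hkeq⟩ | ⟨k, hkeq⟩ | heq
  · -- type 1
    have hcard : A.card = k := by rw [hkeq, Nat.card_Icc]; omega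
    have hoddk : Odd k := hcard ▸ hodd
    have hts := twice_sum_Icc k (2*k-1) (by omega)
    rw [← hkeq, hsum] at hts
    have heq2 : 2*n + k = 3*k*k := by
      obtain ⟨k', rfl⟩ : ∃ k', k = k' + 1 := ⟨k-1, by omega⟩
      have e1 : 2*(k'+1)-1 = 2*k'+1 := by omega
      rw [e1] at hts
      have e2 : (k'+1) * (k'+1-1) = (k'+1) * k' := by rfl
      rw [e2] at hts
      zify at hts ⊢
      linear_combination hts
    have hk2 : 2 ≤ k := by
      by_contra hcon
      have hk1' : k = 1 := by omega
      subst hk1'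
      have hn1 : n = 1 := by omega
      have : (1 : ℕ) ∈ A := by rw [hkeq]; simp
      have := mem_Icc.1 (hsub this)
      omega
    exact ⟨k, hk2, hoddk, Or.inl ⟨hkeq, heq2⟩⟩
  · -- type 2
    have hcard : A.card = k := by rw [hkeq, Nat.card_Icc]; omega
    have hoddk : Odd k := hcard ▸ hodd
    have hk1 : 1 ≤ k := by
      rcases Nat.eq_zero_or_pos k with h|h
      · subst h; simp at hoddk
      · exact h
    have hts := twice_sum_Icc (k+1) (2*k) (by omega)
    rw [← hkeq, hsum] at hts
    have heq2 : 2*n = 3*k*k + k := by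
      have e2 : (k+1) * (k+1-1) = (k+1) * k := by rfl
      rw [e2] at hts
      zify at hts ⊢
      linear_combination hts
    have hk2 : 2 ≤ k := by
      by_contra hcon
      have hk1' : k = 1 := by omega
      subst hk1'
      have hn1 : n = 2 := by omega
      have : (2 : ℕ) ∈ A := by rw [hkeq]; simp
      have := mem_Icc.1 (hsub this)
      omega
    exact ⟨k, hk2, hoddk, Or.inr ⟨hkeq, heq2⟩⟩
  · -- A = {1, n-1} : even card, contradiction
    exfalso
    by_cases h1 : (1:ℕ) = n - 1
    · rw [heq, ← h1] at hsum
      simp at hsum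
      omega
    · rw [heq, Finset.card_pair h1] at hodd
      simp [Nat.odd_iff] at hodd

lemma exc_sum_nonneg (n : ℕ) : 0 ≤ ∑ A ∈ (Pn n).filter (Exc n), (-1:ℤ)^A.card := by
  classical
  set E := (Pn n).filter (Exc n) with hE
  have hsplit : ∑ A ∈ E.filter (fun A => Odd A.card), (-1:ℤ)^A.card
      + ∑ A ∈ E.filter (fun A => ¬ Odd A.card), (-1:ℤ)^A.card = ∑ A ∈ E, (-1:ℤ)^A.card :=
    Finset.sum_filter_add_sum_filter_not E _ _
  set O := E.filter (fun A => Odd A.card) with hO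
  set V := E.filter (fun A => ¬ Odd A.card) with hV
  have hOsum : ∑ A ∈ O, (-1:ℤ)^A.card = -(O.card : ℤ) := by
    rw [Finset.sum_congr rfl (fun A hA => Odd.neg_one_pow (mem_filter.1 hA).2)]
    simp [hO]
  have hVsum : ∑ A ∈ V, (-1:ℤ)^A.card = (V.card : ℤ) := by
    rw [Finset.sum_congr rfl
      (fun A hA => Even.neg_one_pow (Nat.not_odd_iff_even.1 (mem_filter.1 hA).2))]
    rw [Finset.sum_const, nsmul_eq_mul, mul_one]
  have hOcard : O.card ≤ 1 := by
    rw [Finset.card_le_one]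
    intro A hA B hB
    obtain ⟨hAE, hAodd⟩ := mem_filter.1 hA
    obtain ⟨hBE, hBodd⟩ := mem_filter.1 hB
    obtain ⟨k, hk2, hok, hkc⟩ := odd_exc hAE hAodd
    obtain ⟨j, hj2, hoj, hjc⟩ := odd_exc hBE hBodd
    have hk2' : (2:ℤ) ≤ (k:ℤ) := by exact_mod_cast hk2
    have hj2' : (2:ℤ) ≤ (j:ℤ) := by exact_mod_cast hj2
    rcases hkc with ⟨hAeq, e1⟩|⟨hAeq, e1⟩ <;> rcases hjc with ⟨hBeq, e2⟩|⟨hBeq, e2⟩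
    · have E1 : 2*(n:ℤ) + k = 3*k*k := by exact_mod_cast e1
      have E2 : 2*(n:ℤ) + j = 3*j*j := by exact_mod_cast e2
      have hd : ((j:ℤ) - k) * (3*((j:ℤ)+k) - 1) = 0 := by linear_combination E1 - E2
      have hkj : k = j := by rcases mul_eq_zero.1 hd with h|h <;> omega
      rw [hAeq, hBeq, hkj]
    · exfalso
      have E1 : 2*(n:ℤ) + k = 3*k*k := by exact_mod_cast e1
      have E2 : 2*(n:ℤ) = 3*j*j + j := by exact_mod_cast e2
      have hd : ((k:ℤ) + j) * (3*((k:ℤ) - j) - 1) = 0 := by linear_combination E2 - E1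
      rcases mul_eq_zero.1 hd with h|h <;> omega
    · exfalso
      have E1 : 2*(n:ℤ) = 3*k*k + k := by exact_mod_cast e1
      have E2 : 2*(n:ℤ) + j = 3*j*j := by exact_mod_cast e2
      have hd : ((j:ℤ) + k) * (3*((j:ℤ) - k) - 1) = 0 := by linear_combination E1 - E2
      rcases mul_eq_zero.1 hd with h|h <;> omega
    · have E1 : 2*(n:ℤ) = 3*k*k + k := by exact_mod_cast e1
      have E2 : 2*(n:ℤ) = 3*j*j + j := by exact_mod_cast e2
      have hd : ((j:ℤ) - k) * (3*((j:ℤ)+k) + 1) = 0 := by linear_combination E1 - E2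
      have hkj : k = j := by rcases mul_eq_zero.1 hd with h|h <;> omega
      rw [hAeq, hBeq, hkj]
  have hOV : O.Nonempty → 1 ≤ V.card := by
    rintro ⟨A, hA⟩
    obtain ⟨hAE, hAodd⟩ := mem_filter.1 hA
    obtain ⟨k, hk2, hoddk, hcase⟩ := odd_exc hAE hAodd
    have hk3 : 3 ≤ k := by rcases hoddk with ⟨m, hm⟩; omega
    have hkk : 9 ≤ k * k := by calc (9:ℕ) = 3*3 := rfl
                                   _ ≤ k*k := Nat.mul_le_mul hk3 hk3
    have hn : 6 ≤ n := by
      rcases hcase with ⟨_, e⟩|⟨_, e⟩ <;> nlinarith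
    have hmem : ({1, n-1} : Finset ℕ) ∈ V := by
      rw [hV, mem_filter, hE, mem_filter, mem_Pn]
      refine ⟨⟨⟨?_, ?_⟩, Or.inr (Or.inr rfl)⟩, ?_⟩
      · intro x hx
        rcases mem_insert.1 hx with h|h
        · exact h ▸ mem_Icc.2 ⟨le_refl _, by omega⟩
        · rw [mem_singleton.1 h]; exact mem_Icc.2 ⟨by omega, le_refl _⟩
      · rw [Finset.sum_pair (by omega : (1:ℕ) ≠ n-1)]; omega
      · rw [Finset.card_pair (by omega : (1:ℕ) ≠ n-1)]
        exact Nat.not_odd_iff_even.2 ⟨1, rfl⟩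
    exact Finset.card_pos.2 ⟨_, hmem⟩
  rw [← hsplit, hOsum, hVsum]
  rcases Finset.eq_empty_or_nonempty O with h|h
  · simp [h]
  · have h1 := hOV h
    omega

end Stmt9Aux

open Stmt9Aux Finset in
/-- Every diagonal entry of the σ-matrix is nonnegative: `σ_n(n) ≥ 0`. -/
theorem stmt9 (n : ℕ) : 0 ≤ sigmaJ n n := by
  classical
  rw [step1]
  rw [← Finset.sum_filter_add_sum_filter_not (Pn n) (Exc n) (fun A => (-1:ℤ)^A.card)]
  have h0 : ∑ A ∈ (Pn n).filter (fun A => ¬ Exc n A), (-1:ℤ)^A.card = 0 := by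
    apply Finset.sum_involution (fun A _ => phi A)
    · intro A ha
      obtain ⟨hP, hex⟩ := mem_filter.1 ha
      obtain ⟨_, _, _, h4⟩ := phi_main n A hP hex
      show (-1:ℤ)^A.card + (-1:ℤ)^(phi A).card = 0
      rcases h4 with h|h <;> rw [h] <;> ring
    · intro A ha _
      obtain ⟨hP, hex⟩ := mem_filter.1 ha
      obtain ⟨_, _, _, h4⟩ := phi_main n A hP hex
      intro heq
      rw [heq] at h4
      omega
    · intro A ha
      obtain ⟨hP, hex⟩ := mem_filter.1 ha
      obtain ⟨h1, h2, _, _⟩ := phi_main n A hP hex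
      exact mem_filter.2 ⟨h1, h2⟩
    · intro A ha
      obtain ⟨hP, hex⟩ := mem_filter.1 ha
      exact (phi_main n A hP hex).2.2.1
  rw [h0, add_zero]
  exact exc_sum_nonneg n
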